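/- Let p be a prime, n ≥ 1, and E an ultrametric normed space over ℚ_p. Let f : (ℤ_p)^n → E be continuous, with Mahler coefficients a_ν(f) for ν ∈ ℕ^n. Then: (i) ‖a_ν(f)‖ → 0 along the cofinite filter on ℕ^n (equivalently, as |ν| → ∞); (ii) the Mahler series ∑_{ν ∈ ℕ^n} C(x,ν)·a_ν(f) converges to f uniformly on (ℤ_p)^n (i.e., the net of finite partial sums converges to f in the supremum norm); (iii) sup_{ν ∈ ℕ^n} ‖a_ν(f)‖ = sup_{x ∈ (ℤ_p)^n} ‖f(x)‖. -/

import Mathlib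

open Filter Finset
open scoped fwdDiff

noncomputable def mahlerA {p : ℕ} [Fact p.Prime] {n : ℕ} {F : Type*} [AddCommGroup F]
    [Module ℚ_[p] F] (f : (Fin n → ℤ_[p]) → F) (ν : Fin n → ℕ) : F :=
  ∑ μ ∈ Finset.Iic ν,
    ((-1 : ℚ_[p]) ^ ((∑ i, ν i) - (∑ i, μ i)) * ∏ i, ((ν i).choose (μ i) : ℚ_[p])) •
      f (fun i => ((μ i : ℤ_[p])))

variable {p : ℕ} [Fact p.Prime]

lemma castcons {n : ℕ} (j : ℕ) (μ' : Fin n → ℕ) :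
    (fun i => (((Fin.cons j μ' : Fin (n+1) → ℕ) i : ℕ) : ℤ_[p])) = Fin.cons (j : ℤ_[p]) (fun i => (μ' i : ℤ_[p])) := by
  funext i
  refine Fin.cases ?_ (fun i => ?_) i <;> simp

lemma mahlerA_cons {n : ℕ} {F : Type*} [AddCommGroup F] [Module ℚ_[p] F]
    (f : (Fin (n+1) → ℤ_[p]) → F) (k : ℕ) (ν' : Fin n → ℕ) :
    mahlerA f (Fin.cons k ν') =
      mahlerA (fun y => (fwdDiff (1 : ℤ_[p]))^[k] (fun t => f (Fin.cons t y)) 0) ν' := by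
  rw [mahlerA, mahlerA]
  simp only [fwdDiff_iter_eq_sum_shift, Finset.smul_sum]
  rw [Finset.sum_sigma']
  refine Finset.sum_nbij' (i := fun μ => ⟨Fin.tail μ, μ 0⟩)
    (j := fun q => Fin.cons q.2 q.1) ?_ ?_ ?_ ?_ ?_
  · intro μ hμ
    rw [Finset.mem_Iic] at hμ
    refine Finset.mem_sigma.2 ⟨Finset.mem_Iic.2 fun i => ?_, Finset.mem_range.2 ?_⟩
    · exact hμ i.succ
    · exact Nat.lt_succ_of_le (hμ 0)
  · intro q hq
    rw [Finset.mem_sigma, Finset.mem_Iic, Finset.mem_range] at hq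
    refine Finset.mem_Iic.2 (Fin.cons_le_cons.2 ⟨Nat.lt_succ_iff.1 hq.2, hq.1⟩)
  · intro μ _; exact Fin.cons_self_tail μ
  · intro q _; simp [Fin.tail_cons]
  · intro μ hμ
    rw [Finset.mem_Iic] at hμ
    have h0 : μ 0 ≤ k := by simpa using hμ 0
    have htail : ∀ i, Fin.tail μ i ≤ ν' i := fun i => by simpa [Fin.tail] using hμ i.succ
    have hsum : ∑ i, Fin.tail μ i ≤ ∑ i, ν' i := Finset.sum_le_sum fun i _ => htail i
    conv_lhs => rw [← Fin.cons_self_tail μ]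
    rw [castcons]
    rw [← Int.cast_smul_eq_zsmul ℚ_[p], smul_smul]
    congr 1
    · rw [Fin.sum_cons, Fin.sum_cons, Fin.prod_univ_succ]
      simp only [Fin.cons_zero, Fin.cons_succ]
      have he : (k + ∑ i, ν' i) - (μ 0 + ∑ i, Fin.tail μ i)
          = (k - μ 0) + ((∑ i, ν' i) - ∑ i, Fin.tail μ i) := by omega
      rw [he, pow_add]
      push_cast
      ring
    · congr 1
      simp [nsmul_one]

lemma coeff_norm_le_one {n : ℕ} (e : ℕ) (g h : Fin n → ℕ) :
    ‖((-1 : ℚ_[p]) ^ e * ∏ i, ((g i).choose (h i) : ℚ_[p]))‖ ≤ 1 := by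
  have : ((-1 : ℚ_[p]) ^ e * ∏ i, ((g i).choose (h i) : ℚ_[p]))
      = ((((-1 : ℤ) ^ e * ∏ i, ((g i).choose (h i) : ℤ)) : ℤ) : ℚ_[p]) := by
    push_cast; ring
  rw [this]
  exact Padic.norm_int_le_one _

lemma mahlerA_norm_le {n : ℕ} {F : Type*} [NormedAddCommGroup F] [NormedSpace ℚ_[p] F]
    [IsUltrametricDist F] (f : (Fin n → ℤ_[p]) → F) {C : ℝ} (hC : 0 ≤ C)
    (h : ∀ x, ‖f x‖ ≤ C) (ν : Fin n → ℕ) : ‖mahlerA f ν‖ ≤ C := by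
  refine IsUltrametricDist.norm_sum_le_of_forall_le_of_nonneg hC fun μ _ => ?_
  rw [norm_smul]
  calc ‖_‖ * ‖f fun i => ((μ i : ℤ_[p]))‖ ≤ 1 * C :=
        mul_le_mul (coeff_norm_le_one _ _ _) (h _) (norm_nonneg _) zero_le_one
    _ = C := one_mul C

lemma continuous_cons {n : ℕ} :
    Continuous (fun q : ℤ_[p] × (Fin n → ℤ_[p]) => (Fin.cons q.1 q.2 : Fin (n+1) → ℤ_[p])) := by
  refine continuous_pi fun i => ?_
  refine Fin.cases ?_ (fun j => ?_) i
  · simpa using continuous_fst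
  · have hj : Continuous fun q : ℤ_[p] × (Fin n → ℤ_[p]) => q.2 j := (continuous_apply j).comp continuous_snd
    simpa using hj

lemma Iic_cons_sum {n : ℕ} {F : Type*} [AddCommMonoid F] (g : (Fin (n+1) → ℕ) → F)
    (k : ℕ) (ν' : Fin n → ℕ) :
    ∑ μ ∈ Finset.Iic (Fin.cons k ν' : Fin (n+1) → ℕ), g μ
      = ∑ j ∈ Finset.range (k+1), ∑ μ' ∈ Finset.Iic ν', g (Fin.cons j μ') := by
  rw [Finset.sum_sigma']
  refine Finset.sum_nbij' (i := fun μ => ⟨μ 0, Fin.tail μ⟩)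
    (j := fun q => Fin.cons q.1 q.2) ?_ ?_ ?_ ?_ ?_
  · intro μ hμ
    rw [Finset.mem_Iic] at hμ
    refine Finset.mem_sigma.2 ⟨Finset.mem_range.2 (Nat.lt_succ_of_le (by simpa using hμ 0)),
      Finset.mem_Iic.2 fun i => by simpa [Fin.tail] using hμ i.succ⟩
  · intro q hq
    rw [Finset.mem_sigma, Finset.mem_Iic, Finset.mem_range] at hq
    exact Finset.mem_Iic.2 (Fin.cons_le_cons.2 ⟨Nat.lt_succ_iff.1 hq.1, hq.2⟩)
  · intro μ _; exact Fin.cons_self_tail μ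
  · intro q _; simp [Fin.tail_cons]
  · intro μ _; rw [Fin.cons_self_tail]

universe u

theorem mahlerA_tendsto_cofinite :
    ∀ (n : ℕ) (F : Type u) [NormedAddCommGroup F] [NormedSpace ℚ_[p] F] [IsUltrametricDist F]
      (f : (Fin n → ℤ_[p]) → F), Continuous f →
      Tendsto (fun ν => ‖mahlerA f ν‖) cofinite (nhds 0) := by
  intro n
  induction n with
  | zero =>
    intro F _ _ _ f hf
    haveI : Finite (Fin 0 → ℕ) := Finite.of_subsingleton
    rw [Filter.cofinite_eq_bot]
    exact tendsto_bot
  | succ n IH =>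
    intro F _ _ _ f hf
    set G : C(ℤ_[p] × (Fin n → ℤ_[p]), F) := ⟨fun q => f (Fin.cons q.1 q.2),
      hf.comp continuous_cons⟩ with hG
    set g : C(ℤ_[p], C((Fin n → ℤ_[p]), F)) := ContinuousMap.curry G with hg
    set b : ℕ → C((Fin n → ℤ_[p]), F) := fun k => (fwdDiff (1 : ℤ_[p]))^[k] (fun t => g t) 0
      with hb
    have hbk : ∀ (k : ℕ) (t : ℤ_[p]) (y : Fin n → ℤ_[p]),
        ((fwdDiff (1 : ℤ_[p]))^[k] (fun s => g s) t) y
          = (fwdDiff (1 : ℤ_[p]))^[k] (fun s => f (Fin.cons s y)) t := by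
      intro k
      induction k with
      | zero => intro t y; rfl
      | succ k IHk =>
        intro t y
        rw [Function.iterate_succ_apply', Function.iterate_succ_apply']
        simp only [fwdDiff]
        rw [ContinuousMap.sub_apply, IHk, IHk]
    have hcons : ∀ ν : Fin (n+1) → ℕ,
        mahlerA f ν = mahlerA (⇑(b (ν 0))) (Fin.tail ν) := by
      intro ν
      conv_lhs => rw [← Fin.cons_self_tail ν]
      rw [mahlerA_cons]
      congr 1
      funext y
      exact (hbk (ν 0) 0 y).symm
    have hbnorm : Tendsto (fun k => ‖b k‖) atTop (nhds 0) := by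
      letI : Module ℤ_[p] C((Fin n → ℤ_[p]), F) := Module.compHom _ PadicInt.Coe.ringHom
      haveI : IsBoundedSMul ℤ_[p] C((Fin n → ℤ_[p]), F) :=
        IsBoundedSMul.of_norm_smul_le fun r x => by
          show ‖(r : ℚ_[p]) • x‖ ≤ ‖r‖ * ‖x‖
          exact le_of_eq (by rw [norm_smul, PadicInt.padic_norm_e_of_padicInt])
      simpa using (PadicInt.fwdDiff_tendsto_zero g).norm
    refine Metric.tendsto_nhds.mpr fun ε hε => ?_
    rw [Filter.eventually_cofinite]
    have hS : {k : ℕ | ¬ ‖b k‖ < ε}.Finite := by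
      have := hbnorm.eventually (gt_mem_nhds hε)
      rw [← Nat.cofinite_eq_atTop, Filter.eventually_cofinite] at this
      exact this
    have hT : ∀ k : ℕ, {ν' : Fin n → ℕ | ¬ ‖mahlerA (⇑(b k)) ν'‖ < ε}.Finite := by
      intro k
      have := (IH F (⇑(b k)) (b k).continuous).eventually (gt_mem_nhds hε)
      rw [Filter.eventually_cofinite] at this
      exact this
    have hbig : (⋃ k ∈ {k : ℕ | ¬ ‖b k‖ < ε},
        (fun ν' : Fin n → ℕ => (Fin.cons k ν' : Fin (n+1) → ℕ)) ''
          {ν' : Fin n → ℕ | ¬ ‖mahlerA (⇑(b k)) ν'‖ < ε}).Finite :=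
      hS.biUnion fun k _ => (hT k).image _
    refine hbig.subset fun ν hν => ?_
    have hν' : ¬ ‖mahlerA f ν‖ < ε := by
      simpa [Real.dist_eq, abs_of_nonneg (norm_nonneg _)] using hν
    rw [hcons ν] at hν'
    have hk : ¬ ‖b (ν 0)‖ < ε := by
      intro hlt
      exact hν' (lt_of_le_of_lt (mahlerA_norm_le _ (norm_nonneg _)
        (fun x => (b (ν 0)).norm_coe_le_norm x) _) hlt)
    refine Set.mem_biUnion hk ⟨Fin.tail ν, hν', Fin.cons_self_tail ν⟩

theorem mahlerA_inversion {F : Type*} [AddCommGroup F] [Module ℚ_[p] F] :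
    ∀ (n : ℕ) (f : (Fin n → ℤ_[p]) → F) (m : Fin n → ℕ),
      ∑ ν ∈ Finset.Iic m, (∏ i, ((m i).choose (ν i) : ℚ_[p])) • mahlerA f ν
        = f (fun i => (m i : ℤ_[p])) := by
  intro n
  induction n with
  | zero =>
    intro f m
    have hIic : (Finset.Iic m) = {m} := by
      ext x
      simp only [Finset.mem_Iic, Finset.mem_singleton]
      exact ⟨fun _ => Subsingleton.elim x m, fun h => h ▸ le_refl m⟩
    rw [hIic, Finset.sum_singleton, mahlerA, hIic, Finset.sum_singleton]
    simp only [Fin.prod_univ_zero, Fin.sum_univ_zero, Nat.sub_zero, pow_zero, one_mul, one_smul]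
  | succ n IH =>
    intro f m
    conv_lhs => rw [← Fin.cons_self_tail m]
    rw [Iic_cons_sum]
    have hstep : ∀ j ∈ Finset.range (m 0 + 1),
        ∑ μ' ∈ Finset.Iic (Fin.tail m),
          (∏ i, (((Fin.cons (m 0) (Fin.tail m) : Fin (n+1) → ℕ) i).choose
            ((Fin.cons j μ' : Fin (n+1) → ℕ) i) : ℚ_[p])) • mahlerA f (Fin.cons j μ')
        = ((m 0).choose j : ℚ_[p]) •
            (fwdDiff (1 : ℤ_[p]))^[j] (fun t => f (Fin.cons t (fun i => (Fin.tail m i : ℤ_[p])))) 0 := by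
      intro j _
      simp only [Fin.prod_univ_succ, Fin.cons_zero, Fin.cons_succ, mahlerA_cons, mul_smul]
      rw [← Finset.smul_sum, IH]
    rw [Finset.sum_congr rfl hstep]
    simp only [Nat.cast_smul_eq_nsmul]
    rw [← shift_eq_sum_fwdDiff_iter]
    congr 1
    funext i
    refine Fin.cases ?_ (fun i => ?_) i
    · simp [nsmul_one]
    · simp [Fin.tail]

/-- **Mahler coefficients of a continuous function** (Lemma `strongMahcts`, normed case).
Let `E` be an ultrametric normed `ℚ_p`-vector space and `f : (ℤ_p)^n → E` continuous, with
Mahler coefficients `a_ν = ∑_{μ ≤ ν} (−1)^{|ν|−|μ|} C(ν,μ) • f μ`.  Then `‖a_ν‖ → 0` along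
the cofinite filter, the Mahler series converges uniformly to `f`, and
`sup_ν ‖a_ν‖ = sup_x ‖f x‖`. -/
theorem mahler_series_of_continuous (p : ℕ) [Fact p.Prime] (n : ℕ) (hn : 1 ≤ n)
    (E : Type*) [NormedAddCommGroup E] [NormedSpace ℚ_[p] E] [IsUltrametricDist E]
    (f : (Fin n → ℤ_[p]) → E) (hf : Continuous f)
    (a : (Fin n → ℕ) → E)
    (ha : ∀ ν : Fin n → ℕ,
      a ν = ∑ μ ∈ Finset.Iic ν,
        ((-1 : ℚ_[p]) ^ ((∑ i, ν i) - (∑ i, μ i)) * ∏ i, ((ν i).choose (μ i) : ℚ_[p])) •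
          f (fun i => ((μ i : ℤ_[p])))) :
    Tendsto (fun ν : Fin n → ℕ => ‖a ν‖) cofinite (nhds 0) ∧
    TendstoUniformly
      (fun (Φ : Finset (Fin n → ℕ)) (x : Fin n → ℤ_[p]) =>
        ∑ ν ∈ Φ, (∏ i, ((Ring.choose (x i) (ν i) : ℤ_[p]) : ℚ_[p])) • a ν)
      f atTop ∧
    (⨆ ν : Fin n → ℕ, ‖a ν‖) = ⨆ x : Fin n → ℤ_[p], ‖f x‖ := by
  have haA : a = mahlerA f := by funext ν; rw [ha]; rfl
  subst haA
  have h1 : Tendsto (fun ν => ‖mahlerA f ν‖) cofinite (nhds 0) :=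
    mahlerA_tendsto_cofinite n E f hf
  -- boundedness of f
  have hbddf : BddAbove (Set.range fun x => ‖f x‖) := by
    rw [← Set.image_univ]
    exact (isCompact_univ.image hf.norm).bddAbove
  have hfle : ∀ x, ‖f x‖ ≤ ⨆ x, ‖f x‖ := fun x => le_ciSup hbddf x
  have hsupf0 : 0 ≤ ⨆ x : Fin n → ℤ_[p], ‖f x‖ := le_trans (norm_nonneg (f 0)) (hfle 0)
  have hAle : ∀ ν, ‖mahlerA f ν‖ ≤ ⨆ x, ‖f x‖ := mahlerA_norm_le f hsupf0 hfle
  have hbddA : BddAbove (Set.range fun ν => ‖mahlerA f ν‖) := by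
    refine ⟨⨆ x, ‖f x‖, ?_⟩
    rintro r ⟨ν, rfl⟩
    exact hAle ν
  -- continuity of partial sums
  have hSc : ∀ Φ : Finset (Fin n → ℕ), Continuous (fun x : Fin n → ℤ_[p] =>
      ∑ ν ∈ Φ, (∏ i, ((Ring.choose (x i) (ν i) : ℤ_[p]) : ℚ_[p])) • mahlerA f ν) := by
    intro Φ
    refine continuous_finset_sum _ fun ν _ => Continuous.smul ?_ continuous_const
    refine continuous_finset_prod _ fun i _ => ?_
    exact continuous_subtype_val.comp
      ((PadicInt.continuous_choose (ν i)).comp (continuous_apply i))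
  -- density of natural points
  have hdense : Dense (Set.range (fun m : Fin n → ℕ => (fun i => (m i : ℤ_[p])))) := by
    have hr : Set.range (fun m : Fin n → ℕ => (fun i => (m i : ℤ_[p])))
        = Set.univ.pi (fun _ : Fin n => Set.range ((↑) : ℕ → ℤ_[p])) := by
      ext x
      constructor
      · rintro ⟨m, rfl⟩ i _
        exact ⟨m i, rfl⟩
      · intro h
        exact ⟨fun i => (h i trivial).choose, funext fun i => (h i trivial).choose_spec⟩
    rw [hr]
    exact dense_pi Set.univ fun i _ => PadicInt.denseRange_natCast
  -- coefficient norms ≤ 1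
  have hcoef : ∀ (x : Fin n → ℤ_[p]) (ν : Fin n → ℕ),
      ‖∏ i, ((Ring.choose (x i) (ν i) : ℤ_[p]) : ℚ_[p])‖ ≤ 1 := by
    intro x ν
    rw [norm_prod]
    refine Finset.prod_le_one (fun i _ => norm_nonneg _) fun i _ => ?_
    rw [PadicInt.padic_norm_e_of_padicInt]
    exact PadicInt.norm_le_one _
  -- part (ii)
  have h2 : TendstoUniformly
      (fun (Φ : Finset (Fin n → ℕ)) (x : Fin n → ℤ_[p]) =>
        ∑ ν ∈ Φ, (∏ i, ((Ring.choose (x i) (ν i) : ℤ_[p]) : ℚ_[p])) • mahlerA f ν)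
      f atTop := by
    rw [Metric.tendstoUniformly_iff]
    intro ε hε
    have hfin : {ν : Fin n → ℕ | ¬ ‖mahlerA f ν‖ < ε/2}.Finite := by
      have := h1.eventually (gt_mem_nhds (half_pos hε))
      rwa [Filter.eventually_cofinite] at this
    filter_upwards [Filter.eventually_ge_atTop hfin.toFinset] with Φ hΦ
    intro x
    rw [dist_eq_norm]
    refine lt_of_le_of_lt ?_ (half_lt_self hε)
    -- closed set argument
    have hclosed : IsClosed {x : Fin n → ℤ_[p] |
        ‖f x - ∑ ν ∈ Φ, (∏ i, ((Ring.choose (x i) (ν i) : ℤ_[p]) : ℚ_[p])) • mahlerA f ν‖ ≤ ε/2} :=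
      isClosed_le (hf.sub (hSc Φ)).norm continuous_const
    have hnat : ∀ m : Fin n → ℕ,
        ‖f (fun i => (m i : ℤ_[p])) - ∑ ν ∈ Φ,
          (∏ i, ((Ring.choose ((m i : ℤ_[p])) (ν i) : ℤ_[p]) : ℚ_[p])) • mahlerA f ν‖ ≤ ε/2 := by
      intro m
      have hcoefm : ∀ ν : Fin n → ℕ,
          (∏ i, ((Ring.choose ((m i : ℤ_[p])) (ν i) : ℤ_[p]) : ℚ_[p]))
            = ∏ i, ((m i).choose (ν i) : ℚ_[p]) := by
        intro ν
        refine Finset.prod_congr rfl fun i _ => ?_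
        rw [Ring.choose_natCast, PadicInt.coe_natCast]
      simp only [hcoefm]
      have hzero : ∀ ν : Fin n → ℕ, ¬ ν ≤ m →
          (∏ i, ((m i).choose (ν i) : ℚ_[p])) • mahlerA f ν = 0 := by
        intro ν hν
        rw [Pi.le_def, not_forall] at hν
        obtain ⟨i, hi⟩ := hν
        rw [Finset.prod_eq_zero (Finset.mem_univ i), zero_smul]
        rw [Nat.choose_eq_zero_of_lt (by omega), Nat.cast_zero]
      have hsub : ∑ ν ∈ Φ, (∏ i, ((m i).choose (ν i) : ℚ_[p])) • mahlerA f ν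
          = ∑ ν ∈ Φ ∩ Finset.Iic m, (∏ i, ((m i).choose (ν i) : ℚ_[p])) • mahlerA f ν := by
        refine (Finset.sum_subset Finset.inter_subset_left fun ν hν hν' => ?_).symm
        refine hzero ν fun hle => hν' (Finset.mem_inter.2 ⟨hν, Finset.mem_Iic.2 hle⟩)
      rw [hsub, ← mahlerA_inversion n f m,
        ← Finset.sum_sdiff (Finset.inter_subset_right (s₁ := Φ)), add_sub_cancel_right]
      refine IsUltrametricDist.norm_sum_le_of_forall_le_of_nonneg (le_of_lt (half_pos hε))
        fun ν hν => ?_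
      rw [Finset.mem_sdiff, Finset.mem_inter, not_and] at hν
      have hνΦ : ν ∉ Φ := fun h => (hν.2 h) hν.1
      have hν0 : ν ∉ hfin.toFinset := fun h => hνΦ (hΦ h)
      rw [Set.Finite.mem_toFinset, Set.mem_setOf_eq, not_not] at hν0
      have hc1 : ‖∏ i, ((m i).choose (ν i) : ℚ_[p])‖ ≤ 1 := by
        simpa using coeff_norm_le_one (p := p) 0 m ν
      rw [norm_smul]
      calc ‖∏ i, ((m i).choose (ν i) : ℚ_[p])‖ * ‖mahlerA f ν‖ ≤ 1 * ‖mahlerA f ν‖ :=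
            mul_le_mul_of_nonneg_right hc1 (norm_nonneg _)
        _ = ‖mahlerA f ν‖ := one_mul _
        _ ≤ ε/2 := le_of_lt hν0
    have hsubset : Set.range (fun m : Fin n → ℕ => (fun i => (m i : ℤ_[p]))) ⊆
        {x : Fin n → ℤ_[p] |
          ‖f x - ∑ ν ∈ Φ, (∏ i, ((Ring.choose (x i) (ν i) : ℤ_[p]) : ℚ_[p])) • mahlerA f ν‖ ≤ ε/2} := by
      rintro _ ⟨m, rfl⟩
      exact hnat m
    have := closure_minimal hsubset hclosed
    rw [hdense.closure_eq] at this
    exact this trivial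
  refine ⟨h1, h2, ?_⟩
  -- part (iii)
  have h3 : ∀ x : Fin n → ℤ_[p], ‖f x‖ ≤ ⨆ ν : Fin n → ℕ, ‖mahlerA f ν‖ := by
    intro x
    have hptw := h2.tendsto_at x
    refine le_of_tendsto hptw.norm (Filter.Eventually.of_forall fun Φ => ?_)
    refine IsUltrametricDist.norm_sum_le_of_forall_le_of_nonneg
      (Real.iSup_nonneg fun ν => norm_nonneg _) fun ν _ => ?_
    rw [norm_smul]
    calc ‖∏ i, ((Ring.choose (x i) (ν i) : ℤ_[p]) : ℚ_[p])‖ * ‖mahlerA f ν‖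
        ≤ 1 * ‖mahlerA f ν‖ := mul_le_mul_of_nonneg_right (hcoef x ν) (norm_nonneg _)
      _ = ‖mahlerA f ν‖ := one_mul _
      _ ≤ ⨆ ν, ‖mahlerA f ν‖ := le_ciSup hbddA ν
  exact le_antisymm (ciSup_le hAle) (ciSup_le h3)
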